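/- Let K be a field, m, n positive integers, P ∈ GL(m,K), Q ∈ GL(n,K) and R an m×n matrix over K. Let M be the (m+n)×(m+n) block matrix with blocks P⁻¹ and P⁻¹R in the top row and 0 and Q in the bottom row. Then M is invertible, and for every m×n matrix A over K, the image of the row space of the m×(m+n) block matrix (I_m | A) under the linear map x ↦ x·M equals the row space of (I_m | P·A·Q + R). In other words, the lifting map Λ(A) = rowspace(I_m | A) intertwines the rank-metric automorphism A ↦ P·A·Q + R with right multiplication by M: Λ(A)·M = Λ(P·A·Q + R). -/

import Mathlib

open Matrix Submodule

lemma vecMulLinear_mul' {K : Type*} [CommRing K] {a b c : Type*} [Fintype a] [Fintype b] [Fintype c]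
    (X : Matrix a b K) (Y : Matrix b c K) :
    (X * Y).vecMulLinear = Y.vecMulLinear ∘ₗ X.vecMulLinear :=
  LinearMap.ext fun v => (vecMul_vecMul v X Y).symm

theorem lifting_intertwines (K : Type*) [Field K] (m n : ℕ) (hm : 0 < m) (hn : 0 < n)
    (P : Matrix (Fin m) (Fin m) K) (Q : Matrix (Fin n) (Fin n) K)
    (hP : IsUnit P) (hQ : IsUnit Q) (R : Matrix (Fin m) (Fin n) K) :
    IsUnit (Matrix.fromBlocks P⁻¹ (P⁻¹ * R) 0 Q) ∧
    ∀ A : Matrix (Fin m) (Fin n) K,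
      Submodule.map (Matrix.fromBlocks P⁻¹ (P⁻¹ * R) 0 Q).vecMulLinear
          (Submodule.span K
            (Set.range fun i =>
              Matrix.fromCols (1 : Matrix (Fin m) (Fin m) K) A i)) =
        Submodule.span K
          (Set.range fun i =>
            Matrix.fromCols (1 : Matrix (Fin m) (Fin m) K) (P * A * Q + R) i) := by
  have hPdet : IsUnit P.det := (isUnit_iff_isUnit_det P).mp hP
  have hPinv : IsUnit P⁻¹ := (Matrix.isUnit_nonsing_inv_iff).mpr hP
  constructor
  · rw [isUnit_iff_isUnit_det, det_fromBlocks_zero₂₁]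
    exact ((isUnit_iff_isUnit_det _).mp hPinv).mul ((isUnit_iff_isUnit_det Q).mp hQ)
  intro A
  have key : fromCols (1 : Matrix (Fin m) (Fin m) K) A * fromBlocks P⁻¹ (P⁻¹ * R) 0 Q
      = P⁻¹ * fromCols (1 : Matrix (Fin m) (Fin m) K) (P * A * Q + R) := by
    rw [fromCols_mul_fromBlocks, mul_fromCols]
    simp [Matrix.mul_add, Matrix.nonsing_inv_mul_cancel_left P _ hPdet, Matrix.mul_assoc, add_comm]
  have hsurj : Function.Surjective (P⁻¹).vecMulLinear := by
    intro y
    exact ⟨y ᵥ* P, by simp [vecMulLinear_apply, vecMul_vecMul, Matrix.mul_nonsing_inv P hPdet]⟩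
  calc Submodule.map (fromBlocks P⁻¹ (P⁻¹ * R) 0 Q).vecMulLinear
        (span K (Set.range fun i => fromCols (1 : Matrix (Fin m) (Fin m) K) A i))
      = LinearMap.range ((fromCols (1 : Matrix (Fin m) (Fin m) K) A
          * fromBlocks P⁻¹ (P⁻¹ * R) 0 Q).vecMulLinear) := by
        rw [show (fun i => fromCols (1 : Matrix (Fin m) (Fin m) K) A i) =
          (fromCols (1 : Matrix (Fin m) (Fin m) K) A).row from rfl,
          ← range_vecMulLinear, vecMulLinear_mul', LinearMap.range_comp]
    _ = LinearMap.range ((fromCols (1 : Matrix (Fin m) (Fin m) K)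
          (P * A * Q + R)).vecMulLinear) := by
        rw [key, vecMulLinear_mul', LinearMap.range_comp,
          LinearMap.range_eq_top.mpr hsurj, Submodule.map_top]
    _ = span K (Set.range fun i => fromCols (1 : Matrix (Fin m) (Fin m) K) (P * A * Q + R) i) :=
        range_vecMulLinear _
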